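/- Let n be a positive integer and suppose 0 < e < 2^{ρ(n)} where ρ(n) is the lowest zero-bit position of n. Then for every a with 0 < a and C(n − a, a) odd, we have a ≥ 2^{ρ(n)} > e; in particular C(n − a, a) is even for all 0 < a ≤ e. -/

import Mathlib

/-- `rho n` is the position of the lowest zero bit of `n`. -/
noncomputable def rho (n : ℕ) : ℕ := sInf {i | n.testBit i = false}

/-- Bits below `rho n` are all one. -/
lemma testBit_of_lt_rho {n i : ℕ} (h : i < rho n) : n.testBit i = true := by
  have := Nat.notMem_of_lt_sInf (s := {i | n.testBit i = false}) h
  simpa [Set.mem_setOf_eq] using this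

lemma mod_two_pow_of_le_rho (n : ℕ) : ∀ s, s ≤ rho n → n % 2 ^ s = 2 ^ s - 1 := by
  intro s hs
  induction s with
  | zero => simp [Nat.mod_one]
  | succ s ih =>
    have hbit : n.testBit s = true := testBit_of_lt_rho (lt_of_lt_of_le (Nat.lt_succ_self s) hs)
    have hdm : n / 2 ^ s % 2 = 1 := by
      rw [Nat.testBit_eq_decide_div_mod_eq] at hbit
      exact of_decide_eq_true hbit
    have h1 : n % 2 ^ (s + 1) = n % 2 ^ s + 2 ^ s * (n / 2 ^ s % 2) := by
      rw [pow_succ]; exact Nat.mod_mul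
    have h2 : n % 2 ^ s = 2 ^ s - 1 := ih (le_trans (Nat.le_succ s) hs)
    have hp : 0 < 2 ^ s := Nat.pow_pos (by norm_num)
    rw [h1, h2, hdm, pow_succ]
    omega

/-- Key lemma: if `0 < a < 2 ^ rho n`, then `C(n - a, a)` is even. -/
lemma even_choose_of_lt_two_pow_rho {n a : ℕ} (ha : 0 < a) (hlt : a < 2 ^ rho n) :
    Even ((n - a).choose a) := by
  set m := n - a with hm
  by_cases hle : m < a
  · rw [Nat.choose_eq_zero_of_lt hle]; exact Even.zero
  push_neg at hle
  have han : a ≤ n := le_trans hle (Nat.sub_le n a)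
  -- `t` is the lowest set bit of `a`
  obtain ⟨t, b, hb_odd, hab⟩ := Nat.exists_eq_two_pow_mul_odd (n := a) ha.ne'
  have hbpos : 0 < b := hb_odd.pos
  have h2t : (0:ℕ) < 2 ^ t := Nat.pow_pos (by norm_num)
  have h2t1 : (0:ℕ) < 2 ^ (t + 1) := Nat.pow_pos (by norm_num)
  have h2ta : 2 ^ t ≤ a := by
    rw [hab]; exact Nat.le_mul_of_pos_right _ hbpos
  have htrho : t < rho n := by
    have : (2:ℕ) ^ t < 2 ^ rho n := lt_of_le_of_lt h2ta hlt
    exact (Nat.pow_lt_pow_iff_right (by norm_num)).mp this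
  -- `a % 2^(t+1) = 2^t` and `a / 2^t % 2 = 1`
  have hadiv : a / 2 ^ t = b := by rw [hab, Nat.mul_div_cancel_left _ h2t]
  have habit : a / 2 ^ t % 2 = 1 := by rw [hadiv, Nat.odd_iff.mp hb_odd]
  have hamod : a % 2 ^ (t + 1) = 2 ^ t := by
    have : a % 2 ^ (t + 1) = a % 2 ^ t + 2 ^ t * (a / 2 ^ t % 2) := by
      rw [pow_succ]; exact Nat.mod_mul
    have ha0 : a % 2 ^ t = 0 := by rw [hab, Nat.mul_mod_right]
    rw [this, ha0, habit]; ring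
  -- `n % 2^(t+1) = 2^(t+1) - 1`
  have hnmod : n % 2 ^ (t + 1) = 2 ^ (t + 1) - 1 := mod_two_pow_of_le_rho n (t + 1) htrho
  -- `(n - a) % 2^(t+1) = 2^t - 1`
  have hmmod : m % 2 ^ (t + 1) = 2 ^ t - 1 := by
    set P := 2 ^ (t + 1) with hP
    have hPP : P = 2 * 2 ^ t := by rw [hP, pow_succ]; ring
    have hq : a / P ≤ n / P := Nat.div_le_div_right han
    have hnP := Nat.div_add_mod n P
    have haP := Nat.div_add_mod a P
    have hsub : P * (n / P - a / P) = P * (n / P) - P * (a / P) := Nat.mul_sub P _ _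
    have hmul_le : P * (a / P) ≤ P * (n / P) := Nat.mul_le_mul_left P hq
    have hmeq : m = P * (n / P - a / P) + (2 ^ t - 1) := by
      rw [hm]
      omega
    rw [hmeq, Nat.mul_add_mod]
    exact Nat.mod_eq_of_lt (by omega)
  -- bit `t` of `m` is zero
  have hmbit : m / 2 ^ t % 2 = 0 := by
    have : m / 2 ^ t % 2 = m % (2 ^ t * 2) / 2 ^ t := (Nat.mod_mul_right_div_self m _ 2).symm
    rw [this, ← pow_succ, hmmod]
    exact Nat.div_eq_of_lt (by omega)
  -- apply Lucas's theorem
  haveI : Fact (Nat.Prime 2) := ⟨Nat.prime_two⟩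
  have hlucas := Choose.choose_modEq_choose_mul_prod_range_choose
    (n := m) (k := a) (p := 2) (t + 1)
  have hprod : (∏ i ∈ Finset.range (t + 1), (m / 2 ^ i % 2).choose (a / 2 ^ i % 2)) = 0 := by
    apply Finset.prod_eq_zero (Finset.self_mem_range_succ t)
    rw [hmbit, habit]
    rfl
  rw [hprod] at hlucas
  have : ((m.choose a : ℤ)) ≡ 0 [ZMOD (2:ℕ)] := by simpa using hlucas
  have hdvd : (2:ℤ) ∣ (m.choose a : ℤ) := by
    have := (Int.ModEq.dvd this.symm)
    simpa using this
  have : 2 ∣ m.choose a := by exact_mod_cast hdvd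
  exact even_iff_two_dvd.mpr this

theorem stmt_11 (n : ℕ) (hn : 0 < n) (e : ℕ) (he₁ : 0 < e)
    (he₂ : e < 2 ^ rho n) :
    (∀ a, 0 < a → Odd ((n - a).choose a) → 2 ^ rho n ≤ a ∧ e < 2 ^ rho n) ∧
      (∀ a, 0 < a → a ≤ e → Even ((n - a).choose a)) := by
  constructor
  · intro a ha hodd
    refine ⟨?_, he₂⟩
    by_contra h
    push_neg at h
    exact (Nat.not_even_iff_odd.mpr hodd) (even_choose_of_lt_two_pow_rho ha h)
  · intro a ha hae
    exact even_choose_of_lt_two_pow_rho ha (lt_of_le_of_lt hae he₂)
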